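/- Let T(n,k) := (1/(k+1))·C(n,k)·C(n+k,k) and N(n,k) := (1/n)·C(n,k)·C(n,k+1). Then for every integer n ≥ 1 the polynomial identity Σ_{k=0}^{n} T(n,k)·x^k·(1−x)^{n−k} = Σ_{k=0}^{n−1} N(n,k)·x^k holds in ℚ[x]. -/

import Mathlib

open Finset Polynomial

/-- Triangle reindexing of a double sum. -/
private lemma triangle_sum {M : Type*} [AddCommMonoid M] (n : ℕ) (f : ℕ → ℕ → M) :
    ∑ j ∈ Finset.range (n + 1), ∑ i ∈ Finset.range (n + 1 - j), f j i
      = ∑ k ∈ Finset.range (n + 1), ∑ j ∈ Finset.range (k + 1), f j (k - j) := by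
  rw [Finset.sum_sigma', Finset.sum_sigma']
  apply Finset.sum_nbij' (i := fun p => ⟨p.1 + p.2, p.1⟩) (j := fun p => ⟨p.2, p.1 - p.2⟩)
  · intro p hp
    simp only [Finset.mem_sigma, Finset.mem_range] at hp ⊢
    omega
  · intro p hp
    simp only [Finset.mem_sigma, Finset.mem_range] at hp ⊢
    omega
  · intro p hp
    simp only [Finset.mem_sigma, Finset.mem_range] at hp
    simp [Nat.add_sub_cancel_left]
  · intro p hp
    simp only [Finset.mem_sigma, Finset.mem_range] at hp
    have : p.2 + (p.1 - p.2) = p.1 := by omega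
    simp [this]
  · intro p hp
    simp [Nat.add_sub_cancel_left]

/-- The key natural-number identity. -/
private lemma key_nat (n k : ℕ) (hk : k ≤ n) :
    (∑ j ∈ Finset.range (k + 1),
        n.choose j * n.choose (j + 1) * (n - j).choose (k - j)) * (k + 1)
      = n.choose k * (n + k).choose k * n := by
  have h1 : ∀ j ∈ Finset.range (k + 1),
      n.choose j * n.choose (j + 1) * (n - j).choose (k - j)
        = n.choose k * (k.choose j * n.choose (j + 1)) := by
    intro j hj
    rw [Finset.mem_range] at hj
    have hj' : j ≤ k := by omega
    have h := Nat.choose_mul (n := n) hj'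
    calc n.choose j * n.choose (j + 1) * (n - j).choose (k - j)
        = n.choose j * (n - j).choose (k - j) * n.choose (j + 1) := by ring
      _ = n.choose k * k.choose j * n.choose (j + 1) := by rw [← h]
      _ = n.choose k * (k.choose j * n.choose (j + 1)) := by ring
  rw [Finset.sum_congr rfl h1, ← Finset.mul_sum]
  have h2 : (k + n).choose (k + 1)
      = ∑ j ∈ Finset.range (k + 1), k.choose j * n.choose (j + 1) := by
    rw [Nat.add_choose_eq, Finset.Nat.sum_antidiagonal_eq_sum_range_succ_mk,
      Finset.sum_range_succ]
    simp only [Nat.choose_succ_self, zero_mul, add_zero]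
    rw [← Finset.sum_range_reflect]
    apply Finset.sum_congr rfl
    intro j hj
    rw [Finset.mem_range] at hj
    have hjk : j ≤ k := by omega
    have e1 : k + 1 - 1 - j = k - j := by omega
    have e2 : k + 1 - (k - j) = j + 1 := by omega
    rw [e1, Nat.choose_symm hjk, e2]
  rw [← h2]
  have h3 : (n + k).choose (k + 1) * (k + 1) = (n + k).choose k * n := by
    rw [Nat.choose_succ_right_eq]
    congr 1
    omega
  rw [add_comm k n, mul_assoc, h3, mul_assoc]

/-- The key rational identity. -/
private lemma key_rat (n k : ℕ) (hn : 1 ≤ n) (hk : k ≤ n) :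
    ∑ j ∈ Finset.range (k + 1),
        (1 : ℚ) / n * (n.choose j : ℚ) * (n.choose (j + 1) : ℚ) * ((n - j).choose (k - j) : ℚ)
      = 1 / (k + 1) * (n.choose k : ℚ) * ((n + k).choose k : ℚ) := by
  have hnat := key_nat n k hk
  have hq : ((∑ j ∈ Finset.range (k + 1),
      n.choose j * n.choose (j + 1) * (n - j).choose (k - j)) * (k + 1) : ℚ)
        = (n.choose k * (n + k).choose k * n : ℕ) := by exact_mod_cast congrArg (Nat.cast (R := ℚ)) hnat
  push_cast at hq
  have hn0 : (n : ℚ) ≠ 0 := by positivity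
  have hk0 : (k : ℚ) + 1 ≠ 0 := by positivity
  have : ∑ j ∈ Finset.range (k + 1),
      (1 : ℚ) / n * (n.choose j : ℚ) * (n.choose (j + 1) : ℚ) * ((n - j).choose (k - j) : ℚ)
        = (1 / n) * ∑ j ∈ Finset.range (k + 1),
            (n.choose j : ℚ) * (n.choose (j + 1) : ℚ) * ((n - j).choose (k - j) : ℚ) := by
    rw [Finset.mul_sum]
    apply Finset.sum_congr rfl
    intro j _
    ring
  rw [this]
  field_simp
  linarith [hq]

theorem stmt_9 (n : ℕ) (hn : 1 ≤ n) :
    ∑ k ∈ Finset.range (n + 1),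
        Polynomial.C ((1 : ℚ) / (k + 1) * (n.choose k : ℚ) * ((n + k).choose k : ℚ)) *
          Polynomial.X ^ k * (1 - Polynomial.X) ^ (n - k) =
    ∑ k ∈ Finset.range n,
        Polynomial.C ((1 : ℚ) / n * (n.choose k : ℚ) * (n.choose (k + 1) : ℚ)) *
          Polynomial.X ^ k := by
  symm
  have hX : (Polynomial.X + (1 - Polynomial.X) : ℚ[X]) = 1 := by ring
  calc
    ∑ k ∈ Finset.range n,
        Polynomial.C ((1 : ℚ) / n * (n.choose k : ℚ) * (n.choose (k + 1) : ℚ)) *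
          Polynomial.X ^ k
      = ∑ j ∈ Finset.range (n + 1),
          ∑ i ∈ Finset.range (n + 1 - j),
            Polynomial.C ((1 : ℚ) / n * (n.choose j : ℚ) * (n.choose (j + 1) : ℚ)
                * ((n - j).choose i : ℚ)) *
              Polynomial.X ^ (j + i) * (1 - Polynomial.X) ^ (n - j - i) := by
        rw [Finset.sum_range_succ]
        have hlast : ((n.choose (n + 1) : ℚ)) = 0 := by
          rw [Nat.choose_eq_zero_of_lt (by omega)]; norm_num
        rw [hlast]
        simp only [mul_zero, zero_mul, map_zero, Finset.sum_const_zero, add_zero]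
        apply Finset.sum_congr rfl
        intro j hj
        rw [Finset.mem_range] at hj
        have hjn : j ≤ n := by omega
        have hexp : (Polynomial.C ((1 : ℚ) / n * (n.choose j : ℚ) * (n.choose (j + 1) : ℚ)) *
            Polynomial.X ^ j) * (Polynomial.X + (1 - Polynomial.X)) ^ (n - j)
              = Polynomial.C ((1 : ℚ) / n * (n.choose j : ℚ) * (n.choose (j + 1) : ℚ)) *
                Polynomial.X ^ j := by
          rw [hX, one_pow, mul_one]
        rw [← hexp, add_pow, Finset.mul_sum]
        have hrange : n - j + 1 = n + 1 - j := by omega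
        rw [← hrange]
        apply Finset.sum_congr rfl
        intro i hi
        rw [Finset.mem_range] at hi
        have : ((n - j).choose i : ℚ[X]) = Polynomial.C (((n - j).choose i : ℚ)) := by
          simp
        rw [this, pow_add]
        simp only [map_mul, one_div]
        ring
    _ = ∑ k ∈ Finset.range (n + 1),
          ∑ j ∈ Finset.range (k + 1),
            Polynomial.C ((1 : ℚ) / n * (n.choose j : ℚ) * (n.choose (j + 1) : ℚ)
                * ((n - j).choose (k - j) : ℚ)) *
              Polynomial.X ^ (j + (k - j)) * (1 - Polynomial.X) ^ (n - j - (k - j)) :=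
        triangle_sum n _
    _ = ∑ k ∈ Finset.range (n + 1),
        Polynomial.C ((1 : ℚ) / (k + 1) * (n.choose k : ℚ) * ((n + k).choose k : ℚ)) *
          Polynomial.X ^ k * (1 - Polynomial.X) ^ (n - k) := by
        apply Finset.sum_congr rfl
        intro k hk
        rw [Finset.mem_range] at hk
        have hkn : k ≤ n := by omega
        have hinner : ∀ j ∈ Finset.range (k + 1),
            Polynomial.C ((1 : ℚ) / n * (n.choose j : ℚ) * (n.choose (j + 1) : ℚ)
                * ((n - j).choose (k - j) : ℚ)) *
              Polynomial.X ^ (j + (k - j)) * (1 - Polynomial.X) ^ (n - j - (k - j))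
              = Polynomial.C ((1 : ℚ) / n * (n.choose j : ℚ) * (n.choose (j + 1) : ℚ)
                * ((n - j).choose (k - j) : ℚ)) *
              Polynomial.X ^ k * (1 - Polynomial.X) ^ (n - k) := by
          intro j hj
          rw [Finset.mem_range] at hj
          have h1 : j + (k - j) = k := by omega
          have h2 : n - j - (k - j) = n - k := by omega
          rw [h1, h2]
        rw [Finset.sum_congr rfl hinner, ← Finset.sum_mul, ← Finset.sum_mul, ← map_sum,
          key_rat n k hn hkn]
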